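/- For every d ≥ 0 and a ≥ max(2, 2d−1), there exists a graph H_{d,a} with a vertex 2-coloring (labels 1 and 2, each used on half the vertices) such that |V(H_{d,a})| ≤ 8a^d − 6, and for every partial orientation of H_{d,a} of maximum outdegree less than d, there exist vertices u with label 1 and v with label 2 at distance exactly two such that no common neighbor x of u and v satisfies (u,x) or (v,x) being a directed edge. Moreover, H_{d,a} has clique-width at most 6. -/

import Mathlib

open SimpleGraph

variable {V : Type*}

/-- `H` is a partial orientation of `G`: every directed edge of `H` projects to an edge of `G`. -/
def IsPartialOrientation (G : SimpleGraph V) (H : V → V → Prop) : Prop :=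
  ∀ ⦃u v⦄, H u v → G.Adj u v

/-- `oball H v a` is the set of vertices reachable from `v` in `H` by a directed path
of length at most `a`. -/
def oball (H : V → V → Prop) (v : V) : ℕ → Set V
  | 0 => {v}
  | a + 1 => oball H v a ∪ {w | ∃ x ∈ oball H v a, H x w}

/-- `gate G u v` is the set of neighbors of `u` at distance `dist u v - 1` from `v`,
i.e. the possible second vertices of shortest `u`-`v` paths. -/
def gate (G : SimpleGraph V) (u v : V) : Set V :=
  {y | G.Adj u y ∧ G.dist y v = G.dist u v - 1}

/-- `H` is a weak `r`-guidance system of `G`: for distinct `u,v` at distance `ℓ ≤ r`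
there are `a + b = ℓ - 1` and an edge of `G` between `oball H u a` and `oball H v b`. -/
def IsWeakGuidance (G : SimpleGraph V) (H : V → V → Prop) (r : ℕ) : Prop :=
  ∀ u v : V, u ≠ v → G.Reachable u v → G.dist u v ≤ r →
    ∃ a b : ℕ, a + b = G.dist u v - 1 ∧ ∃ x ∈ oball H u a, ∃ y ∈ oball H v b, G.Adj x y

/-- Gate formulation of weak `r`-guidance systems: for `u,v` at distance `ℓ` with
`2 ≤ ℓ ≤ r`, `u` has an outneighbor in `gate G u v` or `v` has one in `gate G v u`. -/
def IsWeakGuidanceGate (G : SimpleGraph V) (H : V → V → Prop) (r : ℕ) : Prop :=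
  ∀ u v : V, 2 ≤ G.dist u v → G.dist u v ≤ r →
    (∃ y ∈ gate G u v, H u y) ∨ (∃ y ∈ gate G v u, H v y)

/-- The outdegree of `u` in the partial orientation `H`. -/
noncomputable def outdeg (H : V → V → Prop) (u : V) : ℕ := {v | H u v}.ncard

/-- Constructible `k`-labeled graphs: `Constructible k S adj lab` means the graph with
vertex set `S`, adjacency `adj` and labeling `lab` (both only relevant on `S`) can be
built from single vertices by disjoint union, relabeling, and adding all edges between
two label classes. -/
inductive Constructible {V : Type*} [DecidableEq V] (k : ℕ) :
    Finset V → (V → V → Prop) → (V → Fin k) → Prop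
  | single (v : V) (lab : V → Fin k) :
      Constructible k {v} (fun _ _ => False) lab
  | union {S T : Finset V} {adj₁ adj₂ : V → V → Prop} {lab : V → Fin k} :
      Disjoint S T →
      Constructible k S adj₁ lab → Constructible k T adj₂ lab →
      Constructible k (S ∪ T) (fun a b => adj₁ a b ∨ adj₂ a b) lab
  | relabel {S : Finset V} {adj : V → V → Prop} {lab : V → Fin k} (i j : Fin k) :
      Constructible k S adj lab →
      Constructible k S adj (fun v => if lab v = i then j else lab v)
  | addEdges {S : Finset V} {adj : V → V → Prop} {lab : V → Fin k} (i j : Fin k) :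
      Constructible k S adj lab →
      Constructible k S (fun a b => adj a b ∨ (a ∈ S ∧ b ∈ S ∧ a ≠ b ∧
        ((lab a = i ∧ lab b = j) ∨ (lab a = j ∧ lab b = i)))) lab
  | congr {S : Finset V} {adj adj' : V → V → Prop} {lab lab' : V → Fin k} :
      Constructible k S adj lab →
      (∀ a b, a ∈ S → b ∈ S → (adj a b ↔ adj' a b)) →
      (∀ a, a ∈ S → lab a = lab' a) →
      Constructible k S adj' lab'

/-- `G` has clique-width at most `k`. -/
def CliqueWidthLE {V : Type*} [DecidableEq V] [Fintype V] (G : SimpleGraph V) (k : ℕ) :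
    Prop :=
  ∃ (adj : V → V → Prop) (lab : V → Fin k),
    Constructible k Finset.univ adj lab ∧ ∀ a b, G.Adj a b ↔ adj a b




set_option linter.unusedVariables false
set_option maxHeartbeats 1000000



def W (a : ℕ) : ℕ → Type
  | 0 => Bool
  | d+1 => (Fin a × (W a d ⊕ Bool)) ⊕ Bool

instance WDecEq (a : ℕ) : ∀ d, DecidableEq (W a d)
  | 0 => instDecidableEqBool
  | d+1 => letI := WDecEq a d; inferInstanceAs (DecidableEq ((Fin a × (W a d ⊕ Bool)) ⊕ Bool))

instance WFintype (a : ℕ) : ∀ d, Fintype (W a d)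
  | 0 => inferInstanceAs (Fintype Bool)
  | d+1 => letI := WFintype a d; inferInstanceAs (Fintype ((Fin a × (W a d ⊕ Bool)) ⊕ Bool))

def labW (a : ℕ) : ∀ d, W a d → Fin 2
  | 0, true => 1
  | 0, false => 0
  | _+1, Sum.inl (_, Sum.inl w) => labW _ _ w
  | _+1, Sum.inl (_, Sum.inr b) => if b then 1 else 0
  | _+1, Sum.inr b => if b then 1 else 0

def adjW (a : ℕ) : ∀ d, W a d → W a d → Prop
  | 0, x, y => x ≠ y
  | d+1, Sum.inl (i, Sum.inl w), Sum.inl (j, Sum.inl w') => i = j ∧ adjW a d w w'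
  | d+1, Sum.inl (i, Sum.inl w), Sum.inl (j, Sum.inr b) => i = j ∧ labW a d w = (if b then 0 else 1)
  | d+1, Sum.inl (i, Sum.inr b), Sum.inl (j, Sum.inl w) => i = j ∧ labW a d w = (if b then 0 else 1)
  | _+1, Sum.inl (_, Sum.inr b), Sum.inr b' => b = b'
  | _+1, Sum.inr b', Sum.inl (_, Sum.inr b) => b' = b
  | _, _, _ => False

lemma card_W_succ (a d : ℕ) : Fintype.card (W a (d+1)) = a * (Fintype.card (W a d) + 2) + 2 := by
  show Fintype.card ((Fin a × (W a d ⊕ Bool)) ⊕ Bool) = _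
  simp [Fintype.card_sum, Fintype.card_prod, mul_comm]

lemma card_W_zero (a : ℕ) : Fintype.card (W a 0) = 2 := rfl

lemma adjW_symm (a : ℕ) : ∀ d (x y : W a d), adjW a d x y → adjW a d y x
  | 0, x, y, h => Ne.symm h
  | d+1, Sum.inl (i, Sum.inl w), Sum.inl (j, Sum.inl w'), ⟨hij, h⟩ =>
      ⟨hij.symm, adjW_symm a d w w' h⟩
  | d+1, Sum.inl (i, Sum.inl w), Sum.inl (j, Sum.inr b), ⟨hij, h⟩ => ⟨hij.symm, h⟩
  | d+1, Sum.inl (i, Sum.inr b), Sum.inl (j, Sum.inl w), ⟨hij, h⟩ => ⟨hij.symm, h⟩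
  | _+1, Sum.inl (_, Sum.inr b), Sum.inr b', h => h.symm
  | _+1, Sum.inr b', Sum.inl (_, Sum.inr b), h => h.symm

lemma adjW_irrefl (a : ℕ) : ∀ d (x : W a d), ¬ adjW a d x x
  | 0, x, h => h rfl
  | d+1, Sum.inl (i, Sum.inl w), ⟨_, h⟩ => adjW_irrefl a d w h
  | _+1, Sum.inl (_, Sum.inr b), h => h
  | _+1, Sum.inr b, h => h

def Gd (a d : ℕ) : SimpleGraph (W a d) where
  Adj := adjW a d
  symm := ⟨fun x y h => adjW_symm a d x y h⟩
  loopless := ⟨fun x h => adjW_irrefl a d x h⟩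


lemma dist_eq_two_iff {V : Type*} (G : SimpleGraph V) {u v : V} :
    G.dist u v = 2 ↔ u ≠ v ∧ ¬G.Adj u v ∧ ∃ x, G.Adj u x ∧ G.Adj x v := by
  constructor
  · intro h
    have hz : G.dist u v ≠ 0 := by omega
    obtain ⟨p, hp⟩ := G.exists_walk_of_dist_ne_zero hz
    rw [h] at hp
    match p, hp with
    | Walk.cons (v := x) hux q, hp =>
      match q, hp with
      | Walk.cons hxv Walk.nil, _ =>
        refine ⟨?_, ?_, x, hux, hxv⟩
        · rintro rfl; rw [G.dist_self] at h; omega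
        · intro hadj
          have := G.dist_le (Walk.cons hadj Walk.nil)
          simp at this; omega
  · rintro ⟨hne, hnadj, x, hux, hxv⟩
    have h2 : G.dist u v ≤ 2 := by
      have := G.dist_le (Walk.cons hux (Walk.cons hxv Walk.nil))
      simpa using this
    have h0 : G.dist u v ≠ 0 := by
      intro hz
      rcases dist_eq_zero_iff_eq_or_not_reachable.mp hz with h' | h'
      · exact hne h'
      · exact h' ⟨Walk.cons hux (Walk.cons hxv Walk.nil)⟩
    have h1 : G.dist u v ≠ 1 := fun h' => hnadj (dist_eq_one_iff_adj.mp h')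
    omega

lemma outdeg_pre_le {I V : Type*} [Finite V] (g : I → V) (hg : Function.Injective g)
    (H : V → V → Prop) (u : V) : {i | H u (g i)}.ncard ≤ outdeg H u := by
  rw [← Set.ncard_image_of_injective _ hg]
  apply Set.ncard_le_ncard _ (Set.toFinite _)
  rintro x ⟨i, hi, rfl⟩
  exact hi

lemma outdeg_map_succ_le {V V' : Type*} [Finite V'] (f : V → V') (hf : Function.Injective f)
    (H : V' → V' → Prop) (u : V) (t : V') (ht : H (f u) t) (htn : ∀ w, f w ≠ t) :
    outdeg (fun x y => H (f x) (f y)) u + 1 ≤ outdeg H (f u) := by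
  have h2 : t ∉ f '' {y | H (f u) (f y)} := by
    rintro ⟨y, _, hy⟩; exact htn y hy
  have h1 : insert t (f '' {y | H (f u) (f y)}) ⊆ {v | H (f u) v} := by
    intro x hx
    rcases Set.mem_insert_iff.mp hx with rfl | ⟨y, hy, rfl⟩
    · exact ht
    · exact hy
  calc outdeg (fun x y => H (f x) (f y)) u + 1
      = (f '' {y | H (f u) (f y)}).ncard + 1 := by
        rw [Set.ncard_image_of_injective _ hf]; rfl
    _ = (insert t (f '' {y | H (f u) (f y)})).ncard :=
        (Set.ncard_insert_of_notMem h2 (Set.toFinite _)).symm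
    _ ≤ {v | H (f u) v}.ncard := Set.ncard_le_ncard h1 (Set.toFinite _)

section main
variable {a : ℕ}

def v3W (a d : ℕ) (i : Fin a) : W a (d+1) := Sum.inl (i, Sum.inr false)
def v4W (a d : ℕ) (i : Fin a) : W a (d+1) := Sum.inl (i, Sum.inr true)
def v5W (a d : ℕ) : W a (d+1) := Sum.inr false
def v6W (a d : ℕ) : W a (d+1) := Sum.inr true
def embW (a d : ℕ) (i : Fin a) (w : W a d) : W a (d+1) := Sum.inl (i, Sum.inl w)

lemma embW_inj (a d : ℕ) (i : Fin a) : Function.Injective (embW a d i) := by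
  intro w w' h
  injection h with h'
  rw [Prod.mk.injEq] at h'
  injection h'.2

lemma mainW (a : ℕ) : ∀ d, 2 * d ≤ a + 1 → ∀ H : W a d → W a d → Prop,
    IsPartialOrientation (Gd a d) H → (∀ u, outdeg H u < d) →
    ∃ u v : W a d, labW a d u = 0 ∧ labW a d v = 1 ∧ (Gd a d).dist u v = 2 ∧
      ∀ x, (Gd a d).Adj u x → (Gd a d).Adj v x → ¬H u x ∧ ¬H v x := by
  intro d
  induction d with
  | zero =>
    intro _ H _ hdeg
    exact absurd (hdeg (show W a 0 from false)) (by omega)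
  | succ d ih =>
    intro hd H hpo hdeg
    classical
    -- the sets of copies v₅ / v₆ point into
    have hT5card : {i : Fin a | H (v5W a d) (v3W a d i)}.ncard ≤ d := by
      have h1 := outdeg_pre_le (v3W a d) (fun i j h => by
        injection h with h'; exact (Prod.mk.injEq _ _ _ _ ▸ h').1) H (v5W a d)
      have h5 := hdeg (v5W a d); omega
    have hT6card : {i : Fin a | H (v6W a d) (v4W a d i)}.ncard ≤ d := by
      have h1 := outdeg_pre_le (v4W a d) (fun i j h => by
        injection h with h'; exact (Prod.mk.injEq _ _ _ _ ▸ h').1) H (v6W a d)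
      have h6 := hdeg (v6W a d); omega
    obtain ⟨i, hi⟩ : ∃ i : Fin a,
        i ∉ ({i | H (v5W a d) (v3W a d i)} ∪ {i | H (v6W a d) (v4W a d i)} : Set (Fin a)) := by
      by_contra hcon
      push_neg at hcon
      have huniv : ({i | H (v5W a d) (v3W a d i)} ∪ {i | H (v6W a d) (v4W a d i)} : Set (Fin a))
          = Set.univ := Set.eq_univ_of_forall hcon
      have hle := Set.ncard_union_le {i : Fin a | H (v5W a d) (v3W a d i)}
        {i : Fin a | H (v6W a d) (v4W a d i)}
      rw [huniv, Set.ncard_univ] at hle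
      simp only [Nat.card_eq_fintype_card, Fintype.card_fin] at hle
      omega
    rw [Set.mem_union] at hi
    push_neg at hi
    have hi5 : ¬ H (v5W a d) (v3W a d i) := hi.1
    have hi6 : ¬ H (v6W a d) (v4W a d i) := hi.2
    by_cases hA : ∃ w : W a d, labW a d w = 1 ∧ ¬ H (embW a d i w) (v3W a d i)
    · -- bad pair (v5, emb i w)
      obtain ⟨w, hw1, hw2⟩ := hA
      refine ⟨v5W a d, embW a d i w, rfl, hw1, ?_, ?_⟩
      · rw [dist_eq_two_iff]
        refine ⟨fun h => Sum.inr_ne_inl h, fun h => h, v3W a d i, rfl, ⟨rfl, by simp [hw1]⟩⟩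
      · intro x hx1 hx2
        match x with
        | Sum.inl (j, Sum.inl w') => exact absurd hx1 (fun h => h)
        | Sum.inr b => exact absurd hx1 (fun h => h)
        | Sum.inl (j, Sum.inr b) =>
          -- hx1 : false = b ; hx2 : i = j ∧ ...
          have hb : b = false := (show (false : Bool) = b from hx1).symm
          have hij : i = j := hx2.1
          subst hb; subst hij
          exact ⟨hi5, hw2⟩
    · by_cases hB : ∃ w : W a d, labW a d w = 0 ∧ ¬ H (embW a d i w) (v4W a d i)
      · obtain ⟨w, hw1, hw2⟩ := hB
        refine ⟨embW a d i w, v6W a d, hw1, rfl, ?_, ?_⟩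
        · rw [dist_eq_two_iff]
          refine ⟨fun h => Sum.inl_ne_inr h, fun h => h, v4W a d i, ⟨rfl, by simp [hw1]⟩, rfl⟩
        · intro x hx1 hx2
          match x with
          | Sum.inl (j, Sum.inl w') => exact absurd hx2 (fun h => h)
          | Sum.inr b => exact absurd hx1 (fun h => h)
          | Sum.inl (j, Sum.inr b) =>
            -- hx1 : i = j ∧ labW w = if b then 0 else 1 ; hx2 : true = b
            have hb : b = true := (show (true : Bool) = b from hx2).symm
            have hij : i = j := hx1.1
            subst hb; subst hij
            exact ⟨hw2, hi6⟩
      · -- case C : recurse into copy i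
        push_neg at hA hB
        set H' : W a d → W a d → Prop := fun u v => H (embW a d i u) (embW a d i v) with hH'
        have hpo' : IsPartialOrientation (Gd a d) H' := by
          intro u v h
          exact (hpo h).2
        have hdeg' : ∀ u, outdeg H' u < d := by
          intro u
          have h01 : labW a d u = 0 ∨ labW a d u = 1 := by
            have : ∀ x : Fin 2, x = 0 ∨ x = 1 := by decide
            exact this _
          have key : ∃ t, H (embW a d i u) t ∧ ∀ w, embW a d i w ≠ t := by
            rcases h01 with h0 | h1
            · exact ⟨v4W a d i, hB u h0, fun w h => by
                injection h with h'; rw [Prod.mk.injEq] at h'; exact Sum.inl_ne_inr h'.2⟩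
            · exact ⟨v3W a d i, hA u h1, fun w h => by
                injection h with h'; rw [Prod.mk.injEq] at h'; exact Sum.inl_ne_inr h'.2⟩
          obtain ⟨t, ht, htn⟩ := key
          have h1 : outdeg H' u + 1 ≤ outdeg H (embW a d i u) :=
            outdeg_map_succ_le (embW a d i) (embW_inj a d i) H u t ht htn
          have h2 := hdeg (embW a d i u)
          omega
        obtain ⟨u, v, hu, hv, hdist, hcn⟩ := ih (by omega) H' hpo' hdeg'
        rw [dist_eq_two_iff] at hdist
        obtain ⟨hne, hnadj, x, hx1, hx2⟩ := hdist
        refine ⟨embW a d i u, embW a d i v, hu, hv, ?_, ?_⟩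
        · rw [dist_eq_two_iff]
          refine ⟨fun h => hne (embW_inj a d i h), fun h => hnadj h.2,
            embW a d i x, ⟨rfl, hx1⟩, ⟨rfl, hx2⟩⟩
        · intro y hy1 hy2
          match y with
          | Sum.inr b => exact absurd hy1 (fun h => h)
          | Sum.inl (j, Sum.inl w) =>
            have hij : i = j := hy1.1
            subst hij
            exact hcn w hy1.2 hy2.2
          | Sum.inl (j, Sum.inr b) =>
            -- hy1 : i = j ∧ labW u = if b then 0 else 1, hy2 same with v
            exfalso
            have h1 := hy1.2
            have h2 := hy2.2
            rw [hu] at h1; rw [hv] at h2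
            cases b
            · simp at h1
            · simp at h2
  end main


lemma bigU {V : Type*} [DecidableEq V] {k m : ℕ} (S : Fin m → Finset V)
    (A : Fin m → V → V → Prop) (lab : V → Fin k)
    (hdisj : ∀ i j, i ≠ j → Disjoint (S i) (S j))
    (h : ∀ i, Constructible k (S i) (A i) lab) :
    ∀ I : Finset (Fin m), I.Nonempty →
      Constructible k (I.biUnion S) (fun x y => ∃ i ∈ I, A i x y) lab := by
  intro I
  induction I using Finset.induction_on with
  | empty => intro h'; simp at h'
  | @insert a s ha ih =>
    intro _
    rcases s.eq_empty_or_nonempty with rfl | hs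
    · have hset : S a = (insert a (∅ : Finset (Fin m))).biUnion S := by simp
      rw [← hset]
      exact (h a).congr (fun x y _ _ => by simp) (fun _ _ => rfl)
    · have hd : Disjoint (S a) (s.biUnion S) := by
        rw [Finset.disjoint_biUnion_right]
        intro j hj
        exact hdisj a j (by rintro rfl; exact ha hj)
      have hu := Constructible.union hd (h a) (ih hs)
      have hset : S a ∪ s.biUnion S = (insert a s).biUnion S := (Finset.biUnion_insert).symm
      rw [hset] at hu
      exact hu.congr (fun x y _ _ => by
        simp only [Finset.mem_insert]
        constructor
        · rintro (h1 | ⟨i, hi, h2⟩)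
          · exact ⟨a, Or.inl rfl, h1⟩
          · exact ⟨i, Or.inr hi, h2⟩
        · rintro ⟨i, (rfl | hi), h2⟩
          · exact Or.inl h2
          · exact Or.inr ⟨i, hi, h2⟩) (fun _ _ => rfl)

def c2 : Fin 2 → Fin 6 := Fin.castLE (by norm_num)

def initL (a d : ℕ) : W a (d+1) → Fin 6
  | Sum.inl (_, Sum.inl w) => c2 (labW a d w)
  | Sum.inl (_, Sum.inr b) => if b then 3 else 2
  | Sum.inr b => if b then 5 else 4

lemma constructW (a : ℕ) (ha : 1 ≤ a) {V' : Type*} [DecidableEq V'] :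
    ∀ (d : ℕ) (f : W a d → V'), Function.Injective f →
    ∀ (lab' : V' → Fin 6), (∀ w, lab' (f w) = c2 (labW a d w)) →
    Constructible 6 (Finset.univ.image f)
      (fun x y => ∃ u v, x = f u ∧ y = f v ∧ adjW a d u v) lab' := by
  intro d
  induction d with
  | zero =>
    intro f hf lab' hlab
    have h3 := Constructible.union (S := {f false}) (T := {f true})
      (by simp [Finset.disjoint_left]; intro h; exact Bool.noConfusion (hf h))
      (Constructible.single (f false) lab') (Constructible.single (f true) lab')
    have h4 := h3.addEdges 0 1
    have hset : ({f false} ∪ {f true} : Finset V') = Finset.univ.image f := by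
      ext x
      simp only [Finset.mem_union, Finset.mem_singleton, Finset.mem_image, Finset.mem_univ,
        true_and]
      constructor
      · rintro (rfl | rfl)
        · exact ⟨false, rfl⟩
        · exact ⟨true, rfl⟩
      · rintro ⟨b, rfl⟩
        match b with
        | false => exact Or.inl rfl
        | true => exact Or.inr rfl
    rw [hset] at h4
    refine h4.congr (fun x y hx hy => ?_) (fun _ _ => rfl)
    simp only [Finset.mem_image, Finset.mem_univ, true_and] at hx hy
    obtain ⟨u, rfl⟩ := hx
    obtain ⟨v, rfl⟩ := hy
    constructor
    · rintro ((h | h) | ⟨_, _, hne, hl⟩)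
      · exact absurd h (fun h => h)
      · exact absurd h (fun h => h)
      · refine ⟨u, v, rfl, rfl, ?_⟩
        intro huv
        exact hne (by rw [huv])
    · rintro ⟨u', v', hu', hv', hadj⟩
      have hu : u = u' := hf hu'
      have hv : v = v' := hf hv'
      subst hu; subst hv
      refine Or.inr ⟨Finset.mem_image_of_mem f (Finset.mem_univ u),
        Finset.mem_image_of_mem f (Finset.mem_univ v), fun h => hadj (hf h), ?_⟩
      rw [hlab, hlab]
      match u, v, hadj with
      | false, true, _ => exact Or.inl ⟨rfl, rfl⟩
      | true, false, _ => exact Or.inr ⟨rfl, rfl⟩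
      | false, false, h => exact absurd rfl h
      | true, true, h => exact absurd rfl h
  | succ d ih =>
    intro f hf lab' hlab
    classical
    -- master labeling
    set L0 : V' → Fin 6 := fun x =>
      if h : ∃ w : W a (d+1), f w = x then initL a d (Classical.choose h) else lab' x with hL0def
    have hL0 : ∀ x : W a (d+1), L0 (f x) = initL a d x := by
      intro x
      have hex : ∃ w : W a (d+1), f w = f x := ⟨x, rfl⟩
      rw [hL0def]
      simp only [dif_pos hex]
      have := Classical.choose_spec hex
      rw [hf this]
    -- abbreviations
    have hc2 : ∀ l : Fin 2, c2 l ≠ 2 ∧ c2 l ≠ 3 ∧ c2 l ≠ 4 ∧ c2 l ≠ 5 := by decide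
    have hc20 : ∀ l : Fin 2, c2 l = 0 ↔ l = 0 := by decide
    have hc21 : ∀ l : Fin 2, c2 l = 1 ↔ l = 1 := by decide
    have hIv3 : ∀ i : Fin a, initL a d (Sum.inl (i, Sum.inr false)) = 2 := fun _ => rfl
    have hIv4 : ∀ i : Fin a, initL a d (Sum.inl (i, Sum.inr true)) = 3 := fun _ => rfl
    -- copy sets and their membership
    have hmem : ∀ (i : Fin a) (x : V'),
        x ∈ Finset.univ.image (f ∘ embW a d i) ∪ ({f (v3W a d i)} ∪ {f (v4W a d i)}) ↔
          ∃ c : W a d ⊕ Bool, x = f (Sum.inl (i, c)) := by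
      intro i x
      simp only [Finset.mem_union, Finset.mem_singleton, Finset.mem_image, Finset.mem_univ,
        true_and, Function.comp_apply]
      constructor
      · rintro (⟨w, rfl⟩ | (rfl | rfl))
        · exact ⟨Sum.inl w, rfl⟩
        · exact ⟨Sum.inr false, rfl⟩
        · exact ⟨Sum.inr true, rfl⟩
      · rintro ⟨c, rfl⟩
        match c with
        | Sum.inl w => exact Or.inl ⟨w, rfl⟩
        | Sum.inr false => exact Or.inr (Or.inl rfl)
        | Sum.inr true => exact Or.inr (Or.inr rfl)
    -- per-copy gadget
    have hcopy : ∀ i : Fin a, Constructible 6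
        (Finset.univ.image (f ∘ embW a d i) ∪ ({f (v3W a d i)} ∪ {f (v4W a d i)}))
        (fun x y => ∃ u v : W a (d+1), x = f u ∧ y = f v ∧
          (∃ cu, u = Sum.inl (i, cu)) ∧ (∃ cv, v = Sum.inl (i, cv)) ∧ adjW a (d+1) u v)
        L0 := by
      intro i
      have hC := ih (f ∘ embW a d i) (hf.comp (embW_inj a d i)) L0
        (fun w => by rw [Function.comp_apply, hL0]; rfl)
      have hd34 : Disjoint ({f (v3W a d i)} : Finset V') {f (v4W a d i)} := by
        simp only [Finset.disjoint_singleton]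
        intro h
        have := hf h
        injection this with h'
        rw [Prod.mk.injEq] at h'
        exact Bool.noConfusion (Sum.inr.inj h'.2)
      have h1 := Constructible.union hd34 (Constructible.single (f (v3W a d i)) L0)
        (Constructible.single (f (v4W a d i)) L0)
      have hdC : Disjoint (Finset.univ.image (f ∘ embW a d i))
          (({f (v3W a d i)} ∪ {f (v4W a d i)}) : Finset V') := by
        rw [Finset.disjoint_left]
        intro x hx hx'
        simp only [Finset.mem_image, Finset.mem_univ, true_and, Function.comp_apply] at hx
        obtain ⟨w, rfl⟩ := hx
        simp only [Finset.mem_union, Finset.mem_singleton] at hx'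
        rcases hx' with h | h <;>
        · have := hf h
          injection this with h'
          rw [Prod.mk.injEq] at h'
          exact Sum.inl_ne_inr h'.2
      have h2 := Constructible.union hdC hC h1
      have h3 := (h2.addEdges 3 0).addEdges 2 1
      refine h3.congr (fun x y hx hy => ?_) (fun _ _ => rfl)
      obtain ⟨cx, rfl⟩ := (hmem i x).mp hx
      obtain ⟨cy, rfl⟩ := (hmem i y).mp hy
      constructor
      · rintro (((⟨u, v, hu, hv, hadj⟩ | (h | h)) | ⟨hxS, hyS, hne, hlabs⟩) |
          ⟨hxS, hyS, hne, hlabs⟩)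
        · exact ⟨embW a d i u, embW a d i v, hu, hv, ⟨Sum.inl u, rfl⟩, ⟨Sum.inl v, rfl⟩,
            rfl, hadj⟩
        · exact h.elim
        · exact h.elim
        · -- addEdges 3 0 : v4 to label-0 vertices
          erw [hL0, hL0] at hlabs
          rcases hlabs with ⟨h3x, h0y⟩ | ⟨h0x, h3y⟩
          · match cx, cy, h3x, h0y with
            | Sum.inl w, _, h3x, _ => exact absurd h3x (hc2 _).2.1
            | Sum.inr false, _, h3x, _ =>
              rw [hIv3] at h3x; exact absurd h3x (by decide)
            | Sum.inr true, Sum.inr false, _, h0y =>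
              rw [hIv3] at h0y; exact absurd h0y (by decide)
            | Sum.inr true, Sum.inr true, _, h0y =>
              rw [hIv4] at h0y; exact absurd h0y (by decide)
            | Sum.inr true, Sum.inl w, _, h0y =>
              exact ⟨Sum.inl (i, Sum.inr true), Sum.inl (i, Sum.inl w), rfl, rfl,
                ⟨_, rfl⟩, ⟨_, rfl⟩, rfl, (hc20 _).mp h0y⟩
          · match cx, cy, h0x, h3y with
            | _, Sum.inl w, _, h3y => exact absurd h3y (hc2 _).2.1
            | _, Sum.inr false, _, h3y =>
              rw [hIv3] at h3y; exact absurd h3y (by decide)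
            | Sum.inr false, Sum.inr true, h0x, _ =>
              rw [hIv3] at h0x; exact absurd h0x (by decide)
            | Sum.inr true, Sum.inr true, h0x, _ =>
              rw [hIv4] at h0x; exact absurd h0x (by decide)
            | Sum.inl w, Sum.inr true, h0x, _ =>
              exact ⟨Sum.inl (i, Sum.inl w), Sum.inl (i, Sum.inr true), rfl, rfl,
                ⟨_, rfl⟩, ⟨_, rfl⟩, rfl, (hc20 _).mp h0x⟩
        · -- addEdges 2 1 : v3 to label-1 vertices
          erw [hL0, hL0] at hlabs
          rcases hlabs with ⟨h2x, h1y⟩ | ⟨h1x, h2y⟩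
          · match cx, cy, h2x, h1y with
            | Sum.inl w, _, h2x, _ => exact absurd h2x (hc2 _).1
            | Sum.inr true, _, h2x, _ =>
              rw [hIv4] at h2x; exact absurd h2x (by decide)
            | Sum.inr false, Sum.inr false, _, h1y =>
              rw [hIv3] at h1y; exact absurd h1y (by decide)
            | Sum.inr false, Sum.inr true, _, h1y =>
              rw [hIv4] at h1y; exact absurd h1y (by decide)
            | Sum.inr false, Sum.inl w, _, h1y =>
              exact ⟨Sum.inl (i, Sum.inr false), Sum.inl (i, Sum.inl w), rfl, rfl,
                ⟨_, rfl⟩, ⟨_, rfl⟩, rfl, (hc21 _).mp h1y⟩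
          · match cx, cy, h1x, h2y with
            | _, Sum.inl w, _, h2y => exact absurd h2y (hc2 _).1
            | _, Sum.inr true, _, h2y =>
              rw [hIv4] at h2y; exact absurd h2y (by decide)
            | Sum.inr false, Sum.inr false, h1x, _ =>
              rw [hIv3] at h1x; exact absurd h1x (by decide)
            | Sum.inr true, Sum.inr false, h1x, _ =>
              rw [hIv4] at h1x; exact absurd h1x (by decide)
            | Sum.inl w, Sum.inr false, h1x, _ =>
              exact ⟨Sum.inl (i, Sum.inl w), Sum.inl (i, Sum.inr false), rfl, rfl,
                ⟨_, rfl⟩, ⟨_, rfl⟩, rfl, (hc21 _).mp h1x⟩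
      · rintro ⟨u, v, hxu, hyv, ⟨cu, rfl⟩, ⟨cv, rfl⟩, hadj⟩
        have hcu : cx = cu := by
          have := hf hxu; injection this with h'; rw [Prod.mk.injEq] at h'; exact h'.2
        have hcv : cy = cv := by
          have := hf hyv; injection this with h'; rw [Prod.mk.injEq] at h'; exact h'.2
        subst hcu; subst hcv
        clear hxu hyv
        have hmemx : f (Sum.inl (i, cx)) ∈
            Finset.univ.image (f ∘ embW a d i) ∪ ({f (v3W a d i)} ∪ {f (v4W a d i)}) :=
          (hmem i _).mpr ⟨cx, rfl⟩
        have hmemy : f (Sum.inl (i, cy)) ∈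
            Finset.univ.image (f ∘ embW a d i) ∪ ({f (v3W a d i)} ∪ {f (v4W a d i)}) :=
          (hmem i _).mpr ⟨cy, rfl⟩
        have hne : f (Sum.inl (i, cx)) ≠ f (Sum.inl (i, cy)) := by
          intro h
          have := hf h
          injection this with h'
          rw [Prod.mk.injEq] at h'
          rw [h'.2] at hadj
          exact adjW_irrefl a (d+1) _ hadj
        match cx, cy, hadj with
        | Sum.inl w, Sum.inl w', hadj =>
          exact Or.inl (Or.inl (Or.inl ⟨w, w', rfl, rfl, hadj.2⟩))
        | Sum.inl w, Sum.inr b, hadj =>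
          match b, hadj with
          | true, hadj =>
            refine Or.inl (Or.inr ⟨hmemx, hmemy, hne, Or.inr ⟨?_, ?_⟩⟩) <;> erw [hL0]
            · show c2 (labW a d w) = 0
              rw [hc20]
              exact hadj.2
            · rfl
          | false, hadj =>
            refine Or.inr ⟨hmemx, hmemy, hne, Or.inr ⟨?_, ?_⟩⟩ <;> erw [hL0]
            · show c2 (labW a d w) = 1
              rw [hc21]
              exact hadj.2
            · rfl
        | Sum.inr b, Sum.inl w, hadj =>
          match b, hadj with
          | true, hadj =>
            refine Or.inl (Or.inr ⟨hmemx, hmemy, hne, Or.inl ⟨?_, ?_⟩⟩) <;> erw [hL0]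
            · rfl
            · show c2 (labW a d w) = 0
              rw [hc20]
              exact hadj.2
          | false, hadj =>
            refine Or.inr ⟨hmemx, hmemy, hne, Or.inl ⟨?_, ?_⟩⟩ <;> erw [hL0]
            · rfl
            · show c2 (labW a d w) = 1
              rw [hc21]
              exact hadj.2
        | Sum.inr b, Sum.inr b', hadj => exact hadj.elim
    have hIv5 : initL a d (Sum.inr false) = 4 := rfl
    have hIv6 : initL a d (Sum.inr true) = 5 := rfl
    -- disjointness of the copy gadgets
    have hSIdisj : ∀ i j : Fin a, i ≠ j →
        Disjoint (Finset.univ.image (f ∘ embW a d i) ∪ ({f (v3W a d i)} ∪ {f (v4W a d i)}))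
          (Finset.univ.image (f ∘ embW a d j) ∪ ({f (v3W a d j)} ∪ {f (v4W a d j)})) := by
      intro i j hij
      rw [Finset.disjoint_left]
      intro x hx hx'
      obtain ⟨c, rfl⟩ := (hmem i x).mp hx
      obtain ⟨c', he⟩ := (hmem j _).mp hx'
      have := hf he
      injection this with h'
      rw [Prod.mk.injEq] at h'
      exact hij h'.1
    haveI : Nonempty (Fin a) := ⟨⟨0, ha⟩⟩
    have hbig := bigU
      (fun i => Finset.univ.image (f ∘ embW a d i) ∪ ({f (v3W a d i)} ∪ {f (v4W a d i)}))
      (fun i x y => ∃ u v : W a (d+1), x = f u ∧ y = f v ∧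
        (∃ cu, u = Sum.inl (i, cu)) ∧ (∃ cv, v = Sum.inl (i, cv)) ∧ adjW a (d+1) u v)
      L0 hSIdisj hcopy Finset.univ Finset.univ_nonempty
    have hd56 : Disjoint ({f (v5W a d)} : Finset V') {f (v6W a d)} := by
      simp only [Finset.disjoint_singleton]
      intro h
      have := hf h
      exact Bool.noConfusion (Sum.inr.inj this)
    have h56 := Constructible.union hd56 (Constructible.single (f (v5W a d)) L0)
      (Constructible.single (f (v6W a d)) L0)
    have hD : Disjoint
        (Finset.univ.biUnion (fun i =>
          Finset.univ.image (f ∘ embW a d i) ∪ ({f (v3W a d i)} ∪ {f (v4W a d i)})))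
        (({f (v5W a d)} ∪ {f (v6W a d)}) : Finset V') := by
      rw [Finset.disjoint_left]
      intro x hx hx'
      rw [Finset.mem_biUnion] at hx
      obtain ⟨i, -, hx⟩ := hx
      obtain ⟨c, rfl⟩ := (hmem i x).mp hx
      simp only [Finset.mem_union, Finset.mem_singleton] at hx'
      rcases hx' with h | h <;> exact Sum.inl_ne_inr (hf h)
    have hall := Constructible.union hD hbig h56
    have e4 := (hall.addEdges 4 2).addEdges 5 3
    have r := (((e4.relabel 2 0).relabel 3 1).relabel 4 0).relabel 5 1
    have hset : (Finset.univ.biUnion (fun i =>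
          Finset.univ.image (f ∘ embW a d i) ∪ ({f (v3W a d i)} ∪ {f (v4W a d i)}))) ∪
        ({f (v5W a d)} ∪ {f (v6W a d)}) = Finset.univ.image f := by
      ext x
      constructor
      · intro hx
        rcases Finset.mem_union.mp hx with hx | hx
        · obtain ⟨i, -, hx⟩ := Finset.mem_biUnion.mp hx
          obtain ⟨c, rfl⟩ := (hmem i x).mp hx
          exact Finset.mem_image_of_mem f (Finset.mem_univ _)
        · rcases Finset.mem_union.mp hx with hx | hx <;>
          · rw [Finset.mem_singleton] at hx
            subst hx
            exact Finset.mem_image_of_mem f (Finset.mem_univ _)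
      · intro hx
        obtain ⟨w, -, rfl⟩ := Finset.mem_image.mp hx
        match w with
        | Sum.inl (i, c) =>
          exact Finset.mem_union_left _
            (Finset.mem_biUnion.mpr ⟨i, Finset.mem_univ i, (hmem i _).mpr ⟨c, rfl⟩⟩)
        | Sum.inr false =>
          exact Finset.mem_union_right _
            (Finset.mem_union_left _ (Finset.mem_singleton_self _))
        | Sum.inr true =>
          exact Finset.mem_union_right _
            (Finset.mem_union_right _ (Finset.mem_singleton_self _))
    rw [hset] at r
    refine r.congr (fun x y hx hy => ?_) (fun x hx => ?_)
    · -- adjacency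
      obtain ⟨wx, -, rfl⟩ := Finset.mem_image.mp hx
      obtain ⟨wy, -, rfl⟩ := Finset.mem_image.mp hy
      constructor
      · rintro (((⟨i, -, u, v, hxu, hyv, -, -, hadj⟩ | (h | h)) | ⟨-, -, hne, hlabs⟩) |
          ⟨-, -, hne, hlabs⟩)
        · exact ⟨u, v, hxu, hyv, hadj⟩
        · exact h.elim
        · exact h.elim
        · -- addEdges 4 2 : v5 -- v3's
          rw [hL0, hL0] at hlabs
          rcases hlabs with ⟨h4x, h2y⟩ | ⟨h2x, h4y⟩
          · match wx, wy, h4x, h2y with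
            | Sum.inl (i, Sum.inl w), _, h4x, _ => exact absurd h4x (hc2 _).2.2.1
            | Sum.inl (i, Sum.inr false), _, h4x, _ =>
              rw [hIv3] at h4x; exact absurd h4x (by decide)
            | Sum.inl (i, Sum.inr true), _, h4x, _ =>
              rw [hIv4] at h4x; exact absurd h4x (by decide)
            | Sum.inr true, _, h4x, _ =>
              rw [hIv6] at h4x; exact absurd h4x (by decide)
            | Sum.inr false, Sum.inl (j, Sum.inl w), _, h2y => exact absurd h2y (hc2 _).1
            | Sum.inr false, Sum.inl (j, Sum.inr true), _, h2y =>
              rw [hIv4] at h2y; exact absurd h2y (by decide)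
            | Sum.inr false, Sum.inr false, _, h2y =>
              rw [hIv5] at h2y; exact absurd h2y (by decide)
            | Sum.inr false, Sum.inr true, _, h2y =>
              rw [hIv6] at h2y; exact absurd h2y (by decide)
            | Sum.inr false, Sum.inl (j, Sum.inr false), _, _ =>
              exact ⟨Sum.inr false, Sum.inl (j, Sum.inr false), rfl, rfl, rfl⟩
          · match wx, wy, h2x, h4y with
            | Sum.inl (i, Sum.inl w), _, h2x, _ => exact absurd h2x (hc2 _).1
            | Sum.inl (i, Sum.inr true), _, h2x, _ =>
              rw [hIv4] at h2x; exact absurd h2x (by decide)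
            | Sum.inr false, _, h2x, _ =>
              rw [hIv5] at h2x; exact absurd h2x (by decide)
            | Sum.inr true, _, h2x, _ =>
              rw [hIv6] at h2x; exact absurd h2x (by decide)
            | Sum.inl (i, Sum.inr false), Sum.inl (j, Sum.inl w), _, h4y =>
              exact absurd h4y (hc2 _).2.2.1
            | Sum.inl (i, Sum.inr false), Sum.inl (j, Sum.inr false), _, h4y =>
              rw [hIv3] at h4y; exact absurd h4y (by decide)
            | Sum.inl (i, Sum.inr false), Sum.inl (j, Sum.inr true), _, h4y =>
              rw [hIv4] at h4y; exact absurd h4y (by decide)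
            | Sum.inl (i, Sum.inr false), Sum.inr true, _, h4y =>
              rw [hIv6] at h4y; exact absurd h4y (by decide)
            | Sum.inl (i, Sum.inr false), Sum.inr false, _, _ =>
              exact ⟨Sum.inl (i, Sum.inr false), Sum.inr false, rfl, rfl, rfl⟩
        · -- addEdges 5 3 : v6 -- v4's
          rw [hL0, hL0] at hlabs
          rcases hlabs with ⟨h5x, h3y⟩ | ⟨h3x, h5y⟩
          · match wx, wy, h5x, h3y with
            | Sum.inl (i, Sum.inl w), _, h5x, _ => exact absurd h5x (hc2 _).2.2.2
            | Sum.inl (i, Sum.inr false), _, h5x, _ =>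
              rw [hIv3] at h5x; exact absurd h5x (by decide)
            | Sum.inl (i, Sum.inr true), _, h5x, _ =>
              rw [hIv4] at h5x; exact absurd h5x (by decide)
            | Sum.inr false, _, h5x, _ =>
              rw [hIv5] at h5x; exact absurd h5x (by decide)
            | Sum.inr true, Sum.inl (j, Sum.inl w), _, h3y => exact absurd h3y (hc2 _).2.1
            | Sum.inr true, Sum.inl (j, Sum.inr false), _, h3y =>
              rw [hIv3] at h3y; exact absurd h3y (by decide)
            | Sum.inr true, Sum.inr false, _, h3y =>
              rw [hIv5] at h3y; exact absurd h3y (by decide)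
            | Sum.inr true, Sum.inr true, _, h3y =>
              rw [hIv6] at h3y; exact absurd h3y (by decide)
            | Sum.inr true, Sum.inl (j, Sum.inr true), _, _ =>
              exact ⟨Sum.inr true, Sum.inl (j, Sum.inr true), rfl, rfl, rfl⟩
          · match wx, wy, h3x, h5y with
            | Sum.inl (i, Sum.inl w), _, h3x, _ => exact absurd h3x (hc2 _).2.1
            | Sum.inl (i, Sum.inr false), _, h3x, _ =>
              rw [hIv3] at h3x; exact absurd h3x (by decide)
            | Sum.inr false, _, h3x, _ =>
              rw [hIv5] at h3x; exact absurd h3x (by decide)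
            | Sum.inr true, _, h3x, _ =>
              rw [hIv6] at h3x; exact absurd h3x (by decide)
            | Sum.inl (i, Sum.inr true), Sum.inl (j, Sum.inl w), _, h5y =>
              exact absurd h5y (hc2 _).2.2.2
            | Sum.inl (i, Sum.inr true), Sum.inl (j, Sum.inr false), _, h5y =>
              rw [hIv3] at h5y; exact absurd h5y (by decide)
            | Sum.inl (i, Sum.inr true), Sum.inl (j, Sum.inr true), _, h5y =>
              rw [hIv4] at h5y; exact absurd h5y (by decide)
            | Sum.inl (i, Sum.inr true), Sum.inr false, _, h5y =>
              rw [hIv5] at h5y; exact absurd h5y (by decide)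
            | Sum.inl (i, Sum.inr true), Sum.inr true, _, _ =>
              exact ⟨Sum.inl (i, Sum.inr true), Sum.inr true, rfl, rfl, rfl⟩
      · rintro ⟨u, v, hxu, hyv, hadj⟩
        have h1 : wx = u := hf hxu
        have h2 : wy = v := hf hyv
        subst h1; subst h2
        have hmemx : f wx ∈ Finset.univ.image f := Finset.mem_image_of_mem f (Finset.mem_univ _)
        have hmemy : f wy ∈ Finset.univ.image f := Finset.mem_image_of_mem f (Finset.mem_univ _)
        have hne : f wx ≠ f wy := by
          intro h
          rw [hf h] at hadj
          exact adjW_irrefl a (d+1) _ hadj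
        match wx, wy, hadj with
        | Sum.inl (i, Sum.inl w), Sum.inl (j, Sum.inl w'), hadj =>
          exact Or.inl (Or.inl (Or.inl ⟨i, Finset.mem_univ i, Sum.inl (i, Sum.inl w),
            Sum.inl (j, Sum.inl w'), rfl, rfl, ⟨Sum.inl w, rfl⟩,
            ⟨Sum.inl w', by rw [hadj.1]⟩, hadj⟩))
        | Sum.inl (i, Sum.inl w), Sum.inl (j, Sum.inr b), hadj =>
          exact Or.inl (Or.inl (Or.inl ⟨i, Finset.mem_univ i, Sum.inl (i, Sum.inl w),
            Sum.inl (j, Sum.inr b), rfl, rfl, ⟨Sum.inl w, rfl⟩,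
            ⟨Sum.inr b, by rw [hadj.1]⟩, hadj⟩))
        | Sum.inl (i, Sum.inr b), Sum.inl (j, Sum.inl w), hadj =>
          exact Or.inl (Or.inl (Or.inl ⟨i, Finset.mem_univ i, Sum.inl (i, Sum.inr b),
            Sum.inl (j, Sum.inl w), rfl, rfl, ⟨Sum.inr b, rfl⟩,
            ⟨Sum.inl w, by rw [hadj.1]⟩, hadj⟩))
        | Sum.inl (i, Sum.inr b), Sum.inl (j, Sum.inr b'), hadj => exact hadj.elim
        | Sum.inl (i, Sum.inl w), Sum.inr b, hadj => exact hadj.elim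
        | Sum.inr b, Sum.inl (j, Sum.inl w), hadj => exact hadj.elim
        | Sum.inr b, Sum.inr b', hadj => exact hadj.elim
        | Sum.inl (i, Sum.inr b), Sum.inr b', hadj =>
          -- hadj : b = b'
          match b, b', hadj with
          | false, true, h => exact Bool.noConfusion h
          | true, false, h => exact Bool.noConfusion h
          | false, false, _ =>
            refine Or.inl (Or.inr ⟨hmemx, hmemy, hne, Or.inr ⟨?_, ?_⟩⟩) <;> erw [hL0]
            · exact hIv3 i
            · exact hIv5
          | true, true, _ =>
            refine Or.inr ⟨hmemx, hmemy, hne, Or.inr ⟨?_, ?_⟩⟩ <;> erw [hL0]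
            · exact hIv4 i
            · exact hIv6
        | Sum.inr b', Sum.inl (j, Sum.inr b), hadj =>
          match b, b', hadj with
          | false, true, h => exact Bool.noConfusion h
          | true, false, h => exact Bool.noConfusion h
          | false, false, _ =>
            refine Or.inl (Or.inr ⟨hmemx, hmemy, hne, Or.inl ⟨?_, ?_⟩⟩) <;> erw [hL0]
            · exact hIv5
            · exact hIv3 j
          | true, true, _ =>
            refine Or.inr ⟨hmemx, hmemy, hne, Or.inl ⟨?_, ?_⟩⟩ <;> erw [hL0]
            · exact hIv6
            · exact hIv4 j
    · -- labels
      obtain ⟨w, -, rfl⟩ := Finset.mem_image.mp hx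
      simp only [hL0, hlab]
      match w with
      | Sum.inl (i, Sum.inl w') =>
        have h1 : initL a d (Sum.inl (i, Sum.inl w')) = c2 (labW a d w') := rfl
        have h2 : labW a (d+1) (Sum.inl (i, Sum.inl w')) = labW a d w' := rfl
        rw [h1, h2]
        generalize labW a d w' = l
        fin_cases l <;> decide
      | Sum.inl (i, Sum.inr false) =>
        rw [hIv3, show labW a (d+1) (Sum.inl (i, Sum.inr false)) = 0 from rfl]
        decide
      | Sum.inl (i, Sum.inr true) =>
        rw [hIv4, show labW a (d+1) (Sum.inl (i, Sum.inr true)) = 1 from rfl]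
        decide
      | Sum.inr false =>
        rw [hIv5, show labW a (d+1) (Sum.inr false : W a (d+1)) = 0 from rfl]
        decide
      | Sum.inr true =>
        rw [hIv6, show labW a (d+1) (Sum.inr true : W a (d+1)) = 1 from rfl]
        decide


def flipW (a : ℕ) : ∀ d, W a d → W a d
  | 0, b => !b
  | d+1, Sum.inl (i, Sum.inl w) => Sum.inl (i, Sum.inl (flipW a d w))
  | _+1, Sum.inl (i, Sum.inr b) => Sum.inl (i, Sum.inr (!b))
  | _+1, Sum.inr b => Sum.inr (!b)

lemma flipW_invol (a : ℕ) : ∀ d (x : W a d), flipW a d (flipW a d x) = x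
  | 0, b => Bool.not_not b
  | d+1, Sum.inl (i, Sum.inl w) => by
    show Sum.inl (i, Sum.inl (flipW a d (flipW a d w))) = (Sum.inl (i, Sum.inl w) : W a (d+1))
    rw [flipW_invol a d w]
  | _+1, Sum.inl (i, Sum.inr b) => by
    show Sum.inl (i, Sum.inr (!!b)) = _
    rw [Bool.not_not]
  | _+1, Sum.inr b => by
    show (Sum.inr (!!b) : W _ (_+1)) = _
    rw [Bool.not_not]

lemma labW_flipW (a : ℕ) : ∀ d (x : W a d),
    labW a d (flipW a d x) = (if labW a d x = 0 then 1 else 0)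
  | 0, b => by cases b <;> rfl
  | d+1, Sum.inl (i, Sum.inl w) => labW_flipW a d w
  | _+1, Sum.inl (i, Sum.inr b) => by cases b <;> rfl
  | _+1, Sum.inr b => by cases b <;> rfl

lemma balanceW (a d : ℕ) :
    (Finset.univ.filter (fun x => labW a d x = 0)).card
      = (Finset.univ.filter (fun x => labW a d x = 1)).card := by
  classical
  apply Finset.card_bij' (fun x _ => flipW a d x) (fun x _ => flipW a d x)
  · intro x hx
    simp only [Finset.mem_filter, Finset.mem_univ, true_and] at hx ⊢
    rw [labW_flipW, hx]
    rfl
  · intro x hx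
    simp only [Finset.mem_filter, Finset.mem_univ, true_and] at hx ⊢
    rw [labW_flipW, hx]
    rfl
  · intro x _; exact flipW_invol a d x
  · intro x _; exact flipW_invol a d x

lemma halfW (a d : ℕ) :
    2 * (Finset.univ.filter (fun x => labW a d x = 0)).card = Fintype.card (W a d) ∧
    2 * (Finset.univ.filter (fun x => labW a d x = 1)).card = Fintype.card (W a d) := by
  classical
  have h := Finset.card_filter_add_card_filter_not
    (s := (Finset.univ : Finset (W a d))) (fun x => labW a d x = 0)
  have hneg : (Finset.univ.filter (fun x => ¬ labW a d x = 0))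
      = Finset.univ.filter (fun x => labW a d x = 1) := by
    apply Finset.filter_congr
    intro x _
    have : ∀ l : Fin 2, (¬ l = 0) ↔ l = 1 := by decide
    exact this _
  rw [hneg] at h
  rw [Finset.card_univ] at h
  have hb := balanceW a d
  omega

lemma sizeW (a : ℕ) (ha : 2 ≤ a) : ∀ d, Fintype.card (W a d) + 6 ≤ 8 * a ^ d := by
  intro d
  induction d with
  | zero => rw [card_W_zero]; simp
  | succ d ih =>
    rw [card_W_succ, pow_succ]
    have h := Nat.mul_le_mul_left a ih
    nlinarith


/-- For every `d ≥ 0` and `a ≥ max(2, 2d − 1)` there is a graph `H_{d,a}` with a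
2-coloring of its vertices (each color used on half the vertices), at most `8a^d − 6`
vertices, clique-width at most `6`, such that for every partial orientation of maximum
outdegree less than `d` there are vertices `u` of the first color and `v` of the second
color at distance exactly two such that no common neighbor `x` of `u` and `v` has
`(u,x)` or `(v,x)` as a directed edge (hence no weak 2-guidance system of `H_{d,a}` has
maximum outdegree less than `d`). -/
theorem cliqueWidth_six_lower_bound (d a : ℕ) (ha : max 2 (2 * d - 1) ≤ a) :
    ∃ (n : ℕ) (G : SimpleGraph (Fin n)) (lab : Fin n → Fin 2),
      n ≤ 8 * a ^ d - 6 ∧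
      2 * (Finset.univ.filter (fun v => lab v = 0)).card = n ∧
      2 * (Finset.univ.filter (fun v => lab v = 1)).card = n ∧
      CliqueWidthLE G 6 ∧
      ∀ H : Fin n → Fin n → Prop, IsPartialOrientation G H →
        (∀ u, outdeg H u < d) →
        ∃ u v : Fin n, lab u = 0 ∧ lab v = 1 ∧ G.dist u v = 2 ∧
          ∀ x, G.Adj u x → G.Adj v x → ¬H u x ∧ ¬H v x := by
  classical
  have ha2 : 2 ≤ a := le_trans (le_max_left _ _) ha
  have had : 2 * d ≤ a + 1 := by
    have := le_trans (le_max_right _ _) ha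
    omega
  obtain ⟨e⟩ : Nonempty (W a d ≃ Fin (Fintype.card (W a d))) := ⟨Fintype.equivFin (W a d)⟩
  set n := Fintype.card (W a d) with hn
  refine ⟨n,
    { Adj := fun x y => adjW a d (e.symm x) (e.symm y)
      symm := ⟨fun x y h => adjW_symm a d _ _ h⟩
      loopless := ⟨fun x h => adjW_irrefl a d _ h⟩ },
    fun x => labW a d (e.symm x), ?_, ?_, ?_, ?_, ?_⟩
  · have := sizeW a ha2 d
    omega
  · show 2 * (Finset.univ.filter (fun v : Fin n => labW a d (e.symm v) = 0)).card
        = Fintype.card (W a d)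
    rw [← (halfW a d).1]
    congr 1
    symm
    apply Finset.card_bij' (fun w _ => e w) (fun v _ => e.symm v)
    · intro w hw
      simp only [Finset.mem_filter, Finset.mem_univ, true_and] at hw ⊢
      rwa [Equiv.symm_apply_apply]
    · intro v hv
      simp only [Finset.mem_filter, Finset.mem_univ, true_and] at hv ⊢
      exact hv
    · intro w _; exact e.symm_apply_apply w
    · intro v _; exact e.apply_symm_apply v
  · show 2 * (Finset.univ.filter (fun v : Fin n => labW a d (e.symm v) = 1)).card
        = Fintype.card (W a d)
    rw [← (halfW a d).2]
    congr 1
    symm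
    apply Finset.card_bij' (fun w _ => e w) (fun v _ => e.symm v)
    · intro w hw
      simp only [Finset.mem_filter, Finset.mem_univ, true_and] at hw ⊢
      rwa [Equiv.symm_apply_apply]
    · intro v hv
      simp only [Finset.mem_filter, Finset.mem_univ, true_and] at hv ⊢
      exact hv
    · intro w _; exact e.symm_apply_apply w
    · intro v _; exact e.apply_symm_apply v
  · -- clique-width
    refine ⟨fun x y => ∃ u v, x = e u ∧ y = e v ∧ adjW a d u v,
      fun x => c2 (labW a d (e.symm x)), ?_, ?_⟩
    · have hC := constructW a (by omega) d (⇑e) e.injective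
        (fun x => c2 (labW a d (e.symm x)))
        (fun w => by simp only [Equiv.symm_apply_apply])
      have himg : Finset.univ.image (⇑e) = (Finset.univ : Finset (Fin n)) := by
        ext x
        simp only [Finset.mem_image, Finset.mem_univ, true_and, iff_true]
        exact ⟨e.symm x, e.apply_symm_apply x⟩
      rwa [himg] at hC
    · intro x y
      constructor
      · intro h
        exact ⟨e.symm x, e.symm y, (e.apply_symm_apply x).symm, (e.apply_symm_apply y).symm, h⟩
      · rintro ⟨u, v, rfl, rfl, h⟩
        simpa [Equiv.symm_apply_apply] using h
  · intro H hpo hdeg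
    set H0 : W a d → W a d → Prop := fun u v => H (e u) (e v) with hH0
    have hpo0 : IsPartialOrientation (Gd a d) H0 := by
      intro u v h
      have := hpo h
      exact (by simpa [Equiv.symm_apply_apply] using this : adjW a d u v)
    have hdeg0 : ∀ u, outdeg H0 u < d := by
      intro u
      have himg : ⇑e '' {v | H0 u v} = {v | H (e u) v} := by
        ext v
        simp only [Set.mem_image, Set.mem_setOf_eq]
        constructor
        · rintro ⟨w, hw, rfl⟩; exact hw
        · intro h
          refine ⟨e.symm v, ?_, e.apply_symm_apply v⟩
          show H (e u) (e (e.symm v))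
          rwa [e.apply_symm_apply]
      have : outdeg H0 u = outdeg H (e u) := by
        show {v | H0 u v}.ncard = {v | H (e u) v}.ncard
        rw [← himg, Set.ncard_image_of_injective _ e.injective]
      rw [this]
      exact hdeg (e u)
    obtain ⟨u, v, hu, hv, hdist, hcn⟩ := mainW a d had H0 hpo0 hdeg0
    rw [dist_eq_two_iff] at hdist
    obtain ⟨hne, hnadj, x, hx1, hx2⟩ := hdist
    refine ⟨e u, e v, by simp only [Equiv.symm_apply_apply]; exact hu,
      by simp only [Equiv.symm_apply_apply]; exact hv, ?_, ?_⟩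
    · rw [dist_eq_two_iff]
      refine ⟨e.injective.ne hne, ?_, e x, ?_, ?_⟩
      · show ¬ adjW a d (e.symm (e u)) (e.symm (e v))
        rwa [Equiv.symm_apply_apply, Equiv.symm_apply_apply]
      · show adjW a d (e.symm (e u)) (e.symm (e x))
        rwa [Equiv.symm_apply_apply, Equiv.symm_apply_apply]
      · show adjW a d (e.symm (e x)) (e.symm (e v))
        rwa [Equiv.symm_apply_apply, Equiv.symm_apply_apply]
    · intro y hy1 hy2
      have hy1' : adjW a d u (e.symm y) := by
        have : adjW a d (e.symm (e u)) (e.symm y) := hy1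
        rwa [Equiv.symm_apply_apply] at this
      have hy2' : adjW a d v (e.symm y) := by
        have : adjW a d (e.symm (e v)) (e.symm y) := hy2
        rwa [Equiv.symm_apply_apply] at this
      obtain ⟨h1, h2⟩ := hcn (e.symm y) hy1' hy2'
      constructor
      · intro h
        apply h1
        show H (e u) (e (e.symm y))
        rwa [e.apply_symm_apply]
      · intro h
        apply h2
        show H (e v) (e (e.symm y))
        rwa [e.apply_symm_apply]
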